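/- Let p ∈ (1/2, 1), let (B_k)_{k≥1} be i.i.d. Bernoulli random variables with Pr(B_k = 1) = p, and let m ∈ ℕ. Define the reflected random walk (ν_k)_{k≥0} by ν_0 = m and, for k ≥ 1, ν_k = ν_{k−1} + 1 if B_k = 1 or ν_{k−1} = 0, and ν_k = ν_{k−1} − 1 otherwise. Then for every real constant c with 0 < c < 2p − 1 and every t ∈ ℕ with t ≥ 1, Pr(ν_t < m + c·t) ≤ exp(−(2p−1−c)²·t/2). -/

import Mathlib

open MeasureTheory ProbabilityTheory

/-- Hoeffding's lemma for a two-point `±1` distribution. -/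
lemma hoeffding_two_point (p q : ℝ) (hp : 0 < p) (hq : 0 < q) (hpq : p + q = 1)
    {x : ℝ} (hx : 0 ≤ x) :
    p * Real.exp (-x) + q * Real.exp x ≤ Real.exp ((q - p) * x + x ^ 2 / 2) := by
  set D : ℝ → ℝ := fun y => p * Real.exp (-y) + q * Real.exp y with hDdef
  set N : ℝ → ℝ := fun y => q * Real.exp y - p * Real.exp (-y) with hNdef
  have hD : ∀ y, 0 < D y := fun y => by positivity
  have hexp' : ∀ y : ℝ, HasDerivAt (fun z : ℝ => Real.exp (-z)) (-Real.exp (-y)) y := by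
    intro y
    have := (Real.hasDerivAt_exp (-y)).comp y (hasDerivAt_neg y)
    simpa [Function.comp_def] using this
  have hD' : ∀ y, HasDerivAt D (N y) y := by
    intro y
    have h1 := ((hexp' y).const_mul p).add ((Real.hasDerivAt_exp y).const_mul q)
    refine h1.congr_deriv ?_
    simp only [hNdef]
    ring
  have hN' : ∀ y, HasDerivAt N (D y) y := by
    intro y
    have h1 := ((Real.hasDerivAt_exp y).const_mul q).sub ((hexp' y).const_mul p)
    refine h1.congr_deriv ?_
    simp only [hDdef]
    ring
  set G : ℝ → ℝ := fun y => N y / D y - ((q - p) + y) with hGdef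
  have hG' : ∀ y, HasDerivAt G ((D y * D y - N y * N y) / D y ^ 2 - 1) y := by
    intro y
    have h1 := ((hN' y).div (hD' y) (hD y).ne').sub ((hasDerivAt_id y).const_add (q - p))
    exact h1
  have hGderiv_le : ∀ y, (D y * D y - N y * N y) / D y ^ 2 - 1 ≤ 0 := by
    intro y
    have h2 : D y * D y - N y * N y ≤ D y ^ 2 := by nlinarith [sq_nonneg (N y)]
    have := (div_le_one (by positivity : (0:ℝ) < D y ^ 2)).mpr h2
    linarith
  have hGanti : AntitoneOn G (Set.Ici (0 : ℝ)) := by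
    refine antitoneOn_of_deriv_nonpos (convex_Ici 0)
      (Continuous.continuousOn (by
        have : Differentiable ℝ G := fun y => (hG' y).differentiableAt
        exact this.continuous))
      (fun y _ => (hG' y).differentiableAt.differentiableWithinAt)
      (fun y _ => by rw [(hG' y).deriv]; exact hGderiv_le y)
  have hG0 : G 0 = 0 := by
    simp only [hGdef, hNdef, hDdef]
    rw [neg_zero, Real.exp_zero]
    field_simp
    linear_combination (p - q) * hpq
  have hGle : ∀ y, 0 ≤ y → G y ≤ 0 := by
    intro y hy
    have := hGanti (Set.self_mem_Ici) (Set.mem_Ici.mpr hy) hy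
    rw [hG0] at this
    exact this
  set F : ℝ → ℝ := fun y => Real.log (D y) - ((q - p) * y + y ^ 2 / 2) with hFdef
  have hF' : ∀ y, HasDerivAt F (G y) y := by
    intro y
    have hlog : HasDerivAt (fun z => Real.log (D z)) (N y / D y) y :=
      (hD' y).log (hD y).ne'
    have hpoly : HasDerivAt (fun z : ℝ => (q - p) * z + z ^ 2 / 2) ((q - p) + y) y := by
      have h2 := ((hasDerivAt_id y).const_mul (q - p)).add
        ((hasDerivAt_pow 2 y).div_const 2)
      refine h2.congr_deriv ?_
      norm_num
    exact hlog.sub hpoly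
  have hFanti : AntitoneOn F (Set.Ici (0 : ℝ)) := by
    refine antitoneOn_of_deriv_nonpos (convex_Ici 0)
      (Continuous.continuousOn (by
        have : Differentiable ℝ F := fun y => (hF' y).differentiableAt
        exact this.continuous))
      (fun y _ => (hF' y).differentiableAt.differentiableWithinAt)
      (fun y hy => by
        rw [(hF' y).deriv]
        exact hGle y (le_of_lt (by simpa using hy)))
  have hF0 : F 0 = 0 := by
    simp [hFdef, hDdef, hpq]
  have hFle : F x ≤ 0 := by
    have := hFanti (Set.self_mem_Ici) (Set.mem_Ici.mpr hx) hx
    rw [hF0] at this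
    exact this
  have hlogle : Real.log (D x) ≤ (q - p) * x + x ^ 2 / 2 := by
    simp only [hFdef] at hFle
    linarith
  calc D x ≤ Real.exp (Real.log (D x)) := by rw [Real.exp_log (hD x)]
    _ ≤ Real.exp ((q - p) * x + x ^ 2 / 2) := Real.exp_le_exp.mpr hlogle

/-- Reflected random walk driven by i.i.d. Bernoulli(p) variables `B_k` (`k ≥ 1`):
`ν_0 = m`, and `ν_k = ν_{k−1} + 1` if `B_k = 1` or `ν_{k−1} = 0`, else `ν_k = ν_{k−1} − 1`.
For `p ∈ (1/2,1)`, `0 < c < 2p−1` and `t ≥ 1`,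
`Pr(ν_t < m + c·t) ≤ exp(−(2p−1−c)²·t/2)`. -/
theorem reflected_walk_lower_tail
    {Ω : Type*} [MeasurableSpace Ω] (μ : Measure Ω) [IsProbabilityMeasure μ]
    (p : ℝ) (hp : p ∈ Set.Ioo (1/2 : ℝ) 1)
    (B : ℕ → Ω → Bool) (hBmeas : ∀ k, Measurable (B k))
    (hBindep : iIndepFun B μ)
    (hBp : ∀ k, μ {ω | B k ω = true} = ENNReal.ofReal p)
    (m : ℕ) (ν : ℕ → Ω → ℕ)
    (hν0 : ∀ ω, ν 0 ω = m)
    (hνrec : ∀ k ω, ν (k + 1) ω =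
      if B (k + 1) ω = true ∨ ν k ω = 0 then ν k ω + 1 else ν k ω - 1)
    (c : ℝ) (hc : 0 < c) (hc' : c < 2 * p - 1) (t : ℕ) (ht : 1 ≤ t) :
    μ {ω | (ν t ω : ℝ) < m + c * t}
      ≤ ENNReal.ofReal (Real.exp (-(2 * p - 1 - c) ^ 2 * t / 2)) := by
  obtain ⟨hp1, hp2⟩ := hp
  have hp0 : 0 < p := by linarith
  have hq0 : 0 < 1 - p := by linarith
  -- the ±1 increments
  set X : ℕ → Ω → ℝ := fun i ω => if B i ω = true then 1 else -1 with hXdef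
  have hXmeas : ∀ i, Measurable (X i) := fun i =>
    Measurable.ite ((hBmeas i) (measurableSet_singleton true)) measurable_const measurable_const
  have hXindep : iIndepFun X μ := by
    have := hBindep.comp (fun _ (b : Bool) => if b then (1:ℝ) else -1)
      (fun _ => Measurable.of_discrete)
    exact this
  -- pathwise comparison
  have hpath : ∀ k ω, (m : ℝ) + ∑ i ∈ Finset.Icc 1 k, X i ω ≤ (ν k ω : ℝ) := by
    intro k ω
    induction k with
    | zero => simp [hν0 ω]
    | succ k ih =>
      rw [Finset.sum_Icc_succ_top (Nat.le_add_left 1 k), hνrec k ω]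
      by_cases hB : B (k + 1) ω = true
      · have hX : X (k + 1) ω = 1 := by simp [hXdef, hB]
        rw [if_pos (Or.inl hB), hX]
        push_cast
        linarith
      · have hX : X (k + 1) ω = -1 := by simp [hXdef, hB]
        by_cases hz : ν k ω = 0
        · rw [if_pos (Or.inr hz), hX]
          push_cast
          linarith
        · rw [if_neg (by tauto), hX]
          have h1 : 1 ≤ ν k ω := Nat.one_le_iff_ne_zero.mpr hz
          rw [Nat.cast_sub h1]
          push_cast
          linarith
  -- parameters
  set lam : ℝ := 2 * p - 1 - c with hlamdef
  have hlam : 0 < lam := by simp [hlamdef]; linarith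
  set s : ℝ := -lam with hsdef
  set S : Ω → ℝ := ∑ i ∈ Finset.Icc 1 t, X i with hSdef
  have hSapp : ∀ ω, S ω = ∑ i ∈ Finset.Icc 1 t, X i ω := fun ω => by
    simp [hSdef]
  -- event inclusion
  have hsub : {ω | (ν t ω : ℝ) < m + c * t} ⊆ {ω | S ω ≤ c * t} := by
    intro ω hω
    simp only [Set.mem_setOf_eq] at hω ⊢
    rw [hSapp]
    have := hpath t ω
    linarith
  -- mgf of each increment
  have hmgf : ∀ i, mgf (X i) μ s = p * Real.exp s + (1 - p) * Real.exp (-s) := by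
    intro i
    have hA : MeasurableSet {ω | B i ω = true} := (hBmeas i) (measurableSet_singleton true)
    have hfun : (fun ω => Real.exp (s * X i ω)) =
        fun ω => Set.indicator {ω | B i ω = true}
          (fun _ => Real.exp s - Real.exp (-s)) ω + Real.exp (-s) := by
      funext ω
      by_cases hB : B i ω = true
      · simp [hXdef, hB, Set.indicator_of_mem (show ω ∈ {ω | B i ω = true} from hB)]
      · simp [hXdef, hB, Set.indicator_of_notMem (show ω ∉ {ω | B i ω = true} from hB)]
    rw [mgf, hfun, integral_add ((integrable_const _).indicator hA) (integrable_const _),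
      integral_indicator_const _ hA, integral_const]
    simp only [measureReal_def, measure_univ, ENNReal.toReal_one, one_smul, smul_eq_mul, hBp i,
      ENNReal.toReal_ofReal hp0.le]
    ring
  -- bound on each mgf factor
  have hfactor : p * Real.exp s + (1 - p) * Real.exp (-s)
      ≤ Real.exp ((1 - 2 * p) * lam + lam ^ 2 / 2) := by
    have := hoeffding_two_point p (1 - p) hp0 hq0 (by ring) hlam.le
    rw [hsdef, neg_neg] at *
    convert this using 2
    ring
  -- integrability of exp (s * S)
  have hSmeas : Measurable S := by
    have hSeq : S = fun ω => ∑ i ∈ Finset.Icc 1 t, X i ω := funext hSapp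
    rw [hSeq]
    exact Finset.measurable_sum _ (fun i _ => hXmeas i)
  have hSbd : ∀ ω, |S ω| ≤ t := by
    intro ω
    rw [hSapp]
    calc |∑ i ∈ Finset.Icc 1 t, X i ω| ≤ ∑ i ∈ Finset.Icc 1 t, |X i ω| :=
          Finset.abs_sum_le_sum_abs _ _
      _ ≤ ∑ i ∈ Finset.Icc 1 t, 1 := by
          refine Finset.sum_le_sum fun i _ => ?_
          by_cases hB : B i ω = true <;> simp [hXdef, hB]
      _ = t := by simp
  have hint : Integrable (fun ω => Real.exp (s * S ω)) μ := by
    refine Integrable.mono' (integrable_const (Real.exp (|s| * t)))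
      ((hSmeas.const_mul s).exp.aestronglyMeasurable) ?_
    filter_upwards with ω
    rw [Real.norm_eq_abs, abs_of_pos (Real.exp_pos _)]
    refine Real.exp_le_exp.mpr ?_
    calc s * S ω ≤ |s * S ω| := le_abs_self _
      _ = |s| * |S ω| := abs_mul _ _
      _ ≤ |s| * t := by
          exact mul_le_mul_of_nonneg_left (hSbd ω) (abs_nonneg _)
  -- Chernoff bound
  have hcher := measure_le_le_exp_mul_mgf (X := S) (μ := μ) (t := s) (c * t)
    (by rw [hsdef]; linarith) hint
  have hmgfS : mgf S μ s = (p * Real.exp s + (1 - p) * Real.exp (-s)) ^ t := by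
    rw [hSdef, hXindep.mgf_sum hXmeas]
    rw [Finset.prod_congr rfl (fun i _ => hmgf i), Finset.prod_const, Nat.card_Icc]
    norm_num
  have hbound : Real.exp (-s * (c * t)) * mgf S μ s
      ≤ Real.exp (-(2 * p - 1 - c) ^ 2 * t / 2) := by
    rw [hmgfS]
    calc Real.exp (-s * (c * t)) * (p * Real.exp s + (1 - p) * Real.exp (-s)) ^ t
        ≤ Real.exp (-s * (c * t)) * Real.exp ((1 - 2 * p) * lam + lam ^ 2 / 2) ^ t := by
          refine mul_le_mul_of_nonneg_left (pow_le_pow_left₀ ?_ hfactor t) (Real.exp_pos _).le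
          positivity
      _ = Real.exp (-s * (c * t) + t * ((1 - 2 * p) * lam + lam ^ 2 / 2)) := by
          rw [← Real.exp_nat_mul, ← Real.exp_add]
      _ = Real.exp (-(2 * p - 1 - c) ^ 2 * t / 2) := by
          congr 1
          rw [hsdef, hlamdef]
          ring
  -- conclusion
  calc μ {ω | (ν t ω : ℝ) < m + c * t} ≤ μ {ω | S ω ≤ c * t} := measure_mono hsub
    _ = ENNReal.ofReal (μ {ω | S ω ≤ c * t}).toReal :=
        (ENNReal.ofReal_toReal (measure_ne_top μ _)).symm
    _ ≤ ENNReal.ofReal (Real.exp (-(2 * p - 1 - c) ^ 2 * t / 2)) :=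
        ENNReal.ofReal_le_ofReal (hcher.trans hbound)
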